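/- arXiv:1010.4497 — 2 statements merged into one kernel-verified Lean document; each statement's English description precedes it below -/
import Mathlib

section
/- Let G be a symmetric V × V matrix over GF(2) with zero diagonal (a loopless graph) and v ∈ V. Then n(G) and n(G∖v) differ by exactly 1, i.e., |n(G) − n(G∖v)| = 1, where G∖v is the principal submatrix of G obtained by deleting the row and column of v. -/
open scoped symmDiff

variable {V : Type*} [DecidableEq V] [Fintype V]

/-- Distance from `X` to the set system with family `D`. -/
noncomputable def dSS (D : Set (Finset V)) (X : Finset V) : ℕ :=
  sInf ((fun Y => (X ∆ Y).card) '' D)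

/-- Pivot (twist) of a set-system family on `X`. -/
def pivotSS (D : Set (Finset V)) (X : Finset V) : Set (Finset V) :=
  (fun Y => Y ∆ X) '' D

/-- Loop complementation on `v`. -/
def lcSS (D : Set (Finset V)) (v : V) : Set (Finset V) :=
  D ∆ ((fun Z => Z ∪ {v}) '' {Z ∈ D | v ∉ Z})

/-- Dual pivot on `v`. -/
def dpSS (D : Set (Finset V)) (v : V) : Set (Finset V) :=
  D ∆ ((fun Z => Z \ {v}) '' {Z ∈ D | v ∈ Z})

/-- Delta-matroid: proper set system with the symmetric exchange axiom. -/
def DeltaMatroid (D : Set (Finset V)) : Prop :=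
  D.Nonempty ∧ ∀ X ∈ D, ∀ Y ∈ D, ∀ u ∈ X ∆ Y, ∃ v ∈ X ∆ Y, X ∆ {u, v} ∈ D

/-- Inclusion-minimal members. -/
def minFam (D : Set (Finset V)) : Set (Finset V) :=
  {X ∈ D | ∀ Y ∈ D, Y ⊆ X → Y = X}

/-- Inclusion-maximal members. -/
def maxFam (D : Set (Finset V)) : Set (Finset V) :=
  {X ∈ D | ∀ Y ∈ D, X ⊆ Y → Y = X}

/-- Members of minimum cardinality. -/
def minCardFam (D : Set (Finset V)) : Set (Finset V) :=
  {X ∈ D | ∀ Y ∈ D, X.card ≤ Y.card}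

/-- Members of maximum cardinality. -/
def maxCardFam (D : Set (Finset V)) : Set (Finset V) :=
  {X ∈ D | ∀ Y ∈ D, Y.card ≤ X.card}

/-- All members have the same cardinality. -/
def Equicardinal (F : Set (Finset V)) : Prop :=
  ∀ X ∈ F, ∀ Y ∈ F, X.card = Y.card

/-- Restriction of the family to subsets of `X`. -/
def restrictSS (D : Set (Finset V)) (X : Finset V) : Set (Finset V) :=
  {Y ∈ D | Y ⊆ X}

/-- The induced subgraph on `V ∖ {v}`: delete the row and column of `v`. -/
def deleteVertex (G : Matrix V V (ZMod 2)) (v : V) :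
    Matrix {x : V // x ≠ v} {x : V // x ≠ v} (ZMod 2) :=
  G.submatrix Subtype.val Subtype.val

/-- Nullity of a square matrix over GF(2). -/
noncomputable def nullity {n : Type*} [Fintype n] [DecidableEq n]
    (A : Matrix n n (ZMod 2)) : ℕ :=
  Fintype.card n - A.rank


open Module Matrix

lemma zmod2_ne_zero : ∀ {a : ZMod 2}, a ≠ 0 → a = 1 := by decide

lemma zmod2_add_self : ∀ (a : ZMod 2), a + a = 0 := by decide

/-- key sum split -/
lemma sum_split {V : Type*} [Fintype V] [DecidableEq V] {i j : V} (hne : i ≠ j)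
    (f : V → ZMod 2) :
    ∑ k : V, f k = f i + f j + ∑ k : {x : V // x ≠ i ∧ x ≠ j}, f k.val := by
  classical
  have h := Fintype.sum_subtype_add_sum_subtype (fun x : V => x ≠ i ∧ x ≠ j) f
  rw [← h]
  have h2 : ∑ k : {x : V // ¬(x ≠ i ∧ x ≠ j)}, f k.val = f i + f j := by
    rw [← Finset.sum_subtype ({i, j} : Finset V)
      (by intro x; simp only [Finset.mem_insert, Finset.mem_singleton]; tauto) f]
    exact Finset.sum_pair hne
  rw [h2]; ring

universe u

lemma aux_even_rank : ∀ (n : ℕ) (V : Type u) [Fintype V] [DecidableEq V]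
    (G : Matrix V V (ZMod 2)), Fintype.card V = n → G.IsSymm → (∀ x, G x x = 0) →
    Even G.rank := by
  intro n
  induction n using Nat.strong_induction_on with
  | _ n ih =>
  intro V _ _ G hcard hsymm hdiag
  by_cases hG : G = 0
  · subst hG; simp
  · -- find an off-diagonal 1
    obtain ⟨i, hi⟩ : ∃ i, G i ≠ 0 := by
      by_contra h; push_neg at h; exact hG (by ext x y; rw [h x]; rfl)
    obtain ⟨j, hj⟩ : ∃ j, G i j ≠ 0 := by
      by_contra h; push_neg at h; exact hi (funext h)
    have hij : G i j = 1 := zmod2_ne_zero hj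
    have hne : i ≠ j := by rintro rfl; rw [hdiag] at hij; exact one_ne_zero hij.symm
    have hGsymm : ∀ x y, G x y = G y x := fun x y =>
      (congrFun (congrFun hsymm x) y).symm
    have hji : G j i = 1 := (hGsymm j i).trans hij
    -- the congruence matrix
    set Nm : Matrix V V (ZMod 2) := Matrix.of (fun x y =>
      if y = i ∨ y = j then 0 else
        if x = i then G j y else if x = j then G i y else 0) with hNm
    set M := (1 : Matrix V V (ZMod 2)) + Nm with hM
    have hNN : Nm * Nm = 0 := by
      ext x y
      rw [Matrix.mul_apply]
      apply Finset.sum_eq_zero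
      intro k _
      by_cases hk : k = i ∨ k = j
      · have : Nm x k = 0 := by simp [hNm, hk]
        rw [this, zero_mul]
      · have : Nm k y = 0 := by
          push_neg at hk
          simp [hNm, hk.1, hk.2]
        rw [this, mul_zero]
    have hMM : M * M = 1 := by
      have e : M * M = 1 + (Nm + Nm) + Nm * Nm := by rw [hM]; noncomm_ring
      have e2 : Nm + Nm = 0 := by ext x y; exact zmod2_add_self _
      rw [e, e2, hNN, add_zero, add_zero]
    have hdet : IsUnit M.det := by
      refine IsUnit.of_mul_eq_one (a := M.det) M.det ?_
      rw [← Matrix.det_mul, hMM, Matrix.det_one]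
    set H := Mᵀ * G * M with hH
    have hrankH : H.rank = G.rank := by
      rw [hH, Matrix.rank_mul_eq_left_of_isUnit_det M (Mᵀ * G) hdet,
        Matrix.rank_mul_eq_right_of_isUnit_det Mᵀ G (by rwa [Matrix.det_transpose])]
    have hHsymm : H.IsSymm := by
      rw [Matrix.IsSymm, hH, Matrix.transpose_mul, Matrix.transpose_mul,
        Matrix.transpose_transpose, hsymm.eq, Matrix.mul_assoc]
    have hHsymm' : ∀ x y, H x y = H y x := fun x y =>
      (congrFun (congrFun hHsymm x) y).symm
    -- entries of G * M
    have hGM : ∀ x y, (G * M) x y = if y = i ∨ y = j then G x y else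
        G x y + G x i * G j y + G x j * G i y := by
      intro x y
      rw [hM, Matrix.mul_add, Matrix.mul_one, Matrix.add_apply, Matrix.mul_apply]
      by_cases hy : y = i ∨ y = j
      · rw [if_pos hy]
        have : ∀ k ∈ Finset.univ, G x k * Nm k y = 0 := by
          intro k _; simp [hNm, hy]
        rw [Finset.sum_eq_zero this, add_zero]
      · rw [if_neg hy]
        rw [sum_split hne (fun k => G x k * Nm k y)]
        have hz : ∑ k : {z : V // z ≠ i ∧ z ≠ j}, G x k.val * Nm k.val y = 0 := by
          apply Finset.sum_eq_zero
          intro k _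
          have : Nm k.val y = 0 := by simp [hNm, hy, k.2.1, k.2.2]
          rw [this, mul_zero]
        have hNi : Nm i y = G j y := by simp [hNm, hy]
        have hNj : Nm j y = G i y := by simp [hNm, hy, hne.symm]
        rw [hz, add_zero, hNi, hNj, add_assoc]
    -- entries of H = Mᵀ * (G*M)
    have hHapp : ∀ x y, H x y = if x = i ∨ x = j then (G * M) x y else
        (G * M) x y + G j x * (G * M) i y + G i x * (G * M) j y := by
      intro x y
      have h0 : H x y = ∑ k : V, M k x * (G * M) k y := by
        rw [hH, Matrix.mul_assoc, Matrix.mul_apply]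
        exact Finset.sum_congr rfl (fun k _ => by rw [Matrix.transpose_apply])
      have expand : ∀ k : V, M k x * (G * M) k y
          = (1 : Matrix V V (ZMod 2)) k x * (G * M) k y + Nm k x * (G * M) k y := by
        intro k; rw [hM, Matrix.add_apply, add_mul]
      rw [h0, Finset.sum_congr rfl (fun k _ => expand k), Finset.sum_add_distrib]
      have h1 : ∑ k : V, (1 : Matrix V V (ZMod 2)) k x * (G * M) k y = (G * M) x y := by
        rw [Finset.sum_eq_single x]
        · rw [Matrix.one_apply_eq, one_mul]
        · intro k _ hk; rw [Matrix.one_apply_ne hk, zero_mul]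
        · intro h; exact absurd (Finset.mem_univ x) h
      rw [h1]
      by_cases hx : x = i ∨ x = j
      · rw [if_pos hx]
        have : ∀ k ∈ Finset.univ, Nm k x * (G * M) k y = 0 := by
          intro k _; simp [hNm, hx]
        rw [Finset.sum_eq_zero this, add_zero]
      · rw [if_neg hx]
        rw [sum_split hne (fun k => Nm k x * (G * M) k y)]
        have hz : ∑ k : {z : V // z ≠ i ∧ z ≠ j}, Nm k.val x * (G * M) k.val y = 0 := by
          apply Finset.sum_eq_zero
          intro k _
          have : Nm k.val x = 0 := by simp [hNm, hx, k.2.1, k.2.2]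
          rw [this, zero_mul]
        have hNi : Nm i x = G j x := by simp [hNm, hx]
        have hNj : Nm j x = G i x := by simp [hNm, hx, hne.symm]
        rw [hz, add_zero, hNi, hNj, add_assoc]
    -- key entry facts
    have hGMi : ∀ y, y ≠ i ∧ y ≠ j → (G * M) i y = 0 := by
      intro y hy
      rw [hGM i y, if_neg (by tauto), hdiag i, zero_mul, add_zero, hij, one_mul]
      exact zmod2_add_self _
    have hGMj : ∀ y, y ≠ i ∧ y ≠ j → (G * M) j y = 0 := by
      intro y hy
      rw [hGM j y, if_neg (by tauto), hji, one_mul, hdiag j, zero_mul, add_zero]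
      exact zmod2_add_self _
    have hHiy : ∀ y, y ≠ i ∧ y ≠ j → H i y = 0 := by
      intro y hy; rw [hHapp i y, if_pos (Or.inl rfl)]; exact hGMi y hy
    have hHjy : ∀ y, y ≠ i ∧ y ≠ j → H j y = 0 := by
      intro y hy; rw [hHapp j y, if_pos (Or.inr rfl)]; exact hGMj y hy
    have hHii : H i i = 0 := by
      rw [hHapp i i, if_pos (Or.inl rfl), hGM i i, if_pos (Or.inl rfl)]; exact hdiag i
    have hHjj : H j j = 0 := by
      rw [hHapp j j, if_pos (Or.inr rfl), hGM j j, if_pos (Or.inr rfl)]; exact hdiag j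
    have hHij : H i j = 1 := by
      rw [hHapp i j, if_pos (Or.inl rfl), hGM i j, if_pos (Or.inr rfl)]; exact hij
    have hHji : H j i = 1 := (hHsymm' j i).trans hHij
    have hHxx : ∀ x, H x x = 0 := by
      intro x
      by_cases hx : x = i ∨ x = j
      · rcases hx with rfl | rfl
        · exact hHii
        · exact hHjj
      · push_neg at hx
        rw [hHapp x x, if_neg (by tauto),
          hGMi x hx, hGMj x hx, mul_zero, mul_zero, add_zero, add_zero,
          hGM x x, if_neg (by tauto), hdiag x, zero_add]
        rw [hGsymm x j, hGsymm i x, mul_comm (G j x) (G x i)]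
        exact zmod2_add_self _
    -- the restricted matrix
    set Wt := {x : V // x ≠ i ∧ x ≠ j} with hWt
    set HW : Matrix Wt Wt (ZMod 2) := H.submatrix Subtype.val Subtype.val with hHW
    have hHx_i : ∀ x : Wt, H x.val i = 0 := fun x => (hHsymm' _ _).trans (hHiy x.val x.2)
    have hHx_j : ∀ x : Wt, H x.val j = 0 := fun x => (hHsymm' _ _).trans (hHjy x.val x.2)
    set ex := Function.ExtendByZero.linearMap (ZMod 2) (Subtype.val : Wt → V) with hex
    have hex_mem : ∀ (z : Wt → ZMod 2) (k : Wt), ex z k.val = z k := by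
      intro z k
      simp only [hex, Function.ExtendByZero.linearMap_apply]
      exact Subtype.val_injective.extend_apply z 0 k
    have hex_i : ∀ z : Wt → ZMod 2, ex z i = 0 := by
      intro z
      have hni : ¬ ∃ k : Wt, (k : V) = i := by rintro ⟨k, hk⟩; exact k.2.1 hk
      simp only [hex, Function.ExtendByZero.linearMap_apply]
      rw [Function.extend_apply' _ _ _ hni]; rfl
    have hex_j : ∀ z : Wt → ZMod 2, ex z j = 0 := by
      intro z
      have hnj : ¬ ∃ k : Wt, (k : V) = j := by rintro ⟨k, hk⟩; exact k.2.2 hk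
      simp only [hex, Function.ExtendByZero.linearMap_apply]
      rw [Function.extend_apply' _ _ _ hnj]; rfl
    have hex_inj : Function.Injective ex := by
      intro a b hab
      funext k
      have := congrFun hab k.val
      rwa [hex_mem, hex_mem] at this
    have hmvH : ∀ (y : V → ZMod 2) (x : V), H.mulVec y x = ∑ k : V, H x k * y k :=
      fun y x => rfl
    have hmvHW : ∀ (z : Wt → ZMod 2) (w : Wt), HW.mulVec z w = ∑ k : Wt, H w.val k.val * z k :=
      fun z w => rfl
    have hker : LinearMap.ker H.mulVecLin = Submodule.map ex (LinearMap.ker HW.mulVecLin) := by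
      ext y
      simp only [LinearMap.mem_ker, Submodule.mem_map, Matrix.mulVecLin_apply]
      constructor
      · intro hy
        have key : ∀ x : V, ∑ k : V, H x k * y k = 0 := by
          intro x
          rw [← hmvH, hy]; rfl
        have hyj : y j = 0 := by
          have h0 := key i
          rw [sum_split hne (fun k => H i k * y k)] at h0
          simp only [hHii, hHij, zero_mul, one_mul, zero_add] at h0
          have hz : ∑ k : Wt, H i k.val * y k.val = 0 :=
            Finset.sum_eq_zero fun k _ => by rw [hHiy k.val k.2, zero_mul]
          rw [hz, add_zero] at h0
          exact h0
        have hyi : y i = 0 := by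
          have h0 := key j
          rw [sum_split hne (fun k => H j k * y k)] at h0
          simp only [hHji, hHjj, zero_mul, one_mul, add_zero] at h0
          have hz : ∑ k : Wt, H j k.val * y k.val = 0 :=
            Finset.sum_eq_zero fun k _ => by rw [hHjy k.val k.2, zero_mul]
          rw [hz, add_zero] at h0
          exact h0
        refine ⟨fun k => y k.val, ?_, ?_⟩
        · funext w
          rw [hmvHW]
          have h0 := key w.val
          rw [sum_split hne (fun k => H w.val k * y k)] at h0
          rw [hHx_i w, hHx_j w, zero_mul, zero_mul, add_zero, zero_add] at h0
          exact h0
        · funext x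
          by_cases hx : x = i ∨ x = j
          · rcases hx with rfl | rfl
            · rw [hex_i, hyi]
            · rw [hex_j, hyj]
          · push_neg at hx
            exact hex_mem (fun k => y k.val) ⟨x, hx⟩
      · rintro ⟨z, hz, rfl⟩
        funext x
        rw [hmvH]
        rw [sum_split hne (fun k => H x k * ex z k), hex_i, hex_j, mul_zero, mul_zero,
          add_zero, zero_add]
        have hrw : ∑ k : Wt, H x k.val * ex z k.val = ∑ k : Wt, H x k.val * z k :=
          Finset.sum_congr rfl fun k _ => by rw [hex_mem]
        rw [hrw]
        by_cases hx : x = i ∨ x = j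
        · rcases hx with rfl | rfl
          · exact Finset.sum_eq_zero fun k _ => by rw [hHiy k.val k.2, zero_mul]
          · exact Finset.sum_eq_zero fun k _ => by rw [hHjy k.val k.2, zero_mul]
        · push_neg at hx
          have := congrFun hz ⟨x, hx⟩
          rw [hmvHW] at this
          exact this
    have hfr : finrank (ZMod 2) (LinearMap.ker H.mulVecLin)
        = finrank (ZMod 2) (LinearMap.ker HW.mulVecLin) := by
      rw [hker]
      exact (LinearEquiv.finrank_eq (Submodule.equivMapOfInjective ex hex_inj _)).symm
    have hcard2 : 1 < Fintype.card V := Fintype.one_lt_card_iff.2 ⟨i, j, hne⟩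
    have hcardW : Fintype.card Wt + 2 = Fintype.card V := by
      have h1 : Fintype.card Wt = (Finset.univ.filter (fun x : V => x ≠ i ∧ x ≠ j)).card :=
        Fintype.card_subtype _
      have h2 : Finset.univ.filter (fun x : V => x ≠ i ∧ x ≠ j) = ({i, j} : Finset V)ᶜ := by
        ext x
        simp only [Finset.mem_filter, Finset.mem_univ, true_and, Finset.mem_compl,
          Finset.mem_insert, Finset.mem_singleton]
        tauto
      rw [h1, h2, Finset.card_compl, Finset.card_pair hne]
      omega
    have e1 : H.rank + finrank (ZMod 2) (LinearMap.ker H.mulVecLin) = Fintype.card V := by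
      rw [Matrix.rank]
      rw [LinearMap.finrank_range_add_finrank_ker H.mulVecLin]
      exact Module.finrank_pi (ZMod 2)
    have e2 : HW.rank + finrank (ZMod 2) (LinearMap.ker HW.mulVecLin) = Fintype.card Wt := by
      rw [Matrix.rank]
      rw [LinearMap.finrank_range_add_finrank_ker HW.mulVecLin]
      exact Module.finrank_pi (ZMod 2)
    have hrHW : HW.rank + 2 = H.rank := by omega
    have hHWsymm : HW.IsSymm := by
      rw [Matrix.IsSymm]
      ext x y
      rw [Matrix.transpose_apply]
      exact hHsymm' y.val x.val
    have hHWdiag : ∀ x : Wt, HW x x = 0 := fun x => hHxx x.val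
    have hevenHW : Even HW.rank := ih (Fintype.card Wt) (by omega) Wt HW rfl hHWsymm hHWdiag
    rw [← hrankH, ← hrHW]
    exact hevenHW.add even_two


section RowDel
variable {K : Type*} [Field K]

lemma aux_rank_row_del {V n : Type*} [Fintype V] [Fintype n] [DecidableEq V]
    (A : Matrix V n K) (v : V) :
    (A.submatrix (Subtype.val : {x : V // x ≠ v} → V) id).rank ≤ A.rank ∧
      A.rank ≤ (A.submatrix (Subtype.val : {x : V // x ≠ v} → V) id).rank + 1 := by
  classical
  set π := LinearMap.funLeft K K (Subtype.val : {x : V // x ≠ v} → V) with hπ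
  have hsub : (A.submatrix (Subtype.val : {x : V // x ≠ v} → V) id).mulVecLin
      = π ∘ₗ A.mulVecLin := by
    have h := Matrix.mulVecLin_submatrix (Subtype.val : {x : V // x ≠ v} → V) (Equiv.refl n) A
    simp only [Equiv.coe_refl, Equiv.refl_symm] at h
    rw [h]; rfl
  have hrange : LinearMap.range (A.submatrix (Subtype.val : {x : V // x ≠ v} → V) id).mulVecLin
      = Submodule.map π (LinearMap.range A.mulVecLin) := by
    rw [hsub, LinearMap.range_comp]
  constructor
  · rw [Matrix.rank, Matrix.rank, hrange]
    exact Submodule.finrank_map_le _ _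
  · set Wr := LinearMap.range A.mulVecLin with hWr
    set q := π.domRestrict Wr with hq
    have h1 : finrank K Wr = finrank K (LinearMap.range q) + finrank K (LinearMap.ker q) :=
      (LinearMap.finrank_range_add_finrank_ker q).symm
    have h2 : LinearMap.range q = Submodule.map π Wr := LinearMap.range_domRestrict Wr π
    have h3 : finrank K (LinearMap.ker q) ≤ 1 := by
      have hinj : Function.Injective
          ((LinearMap.proj v : (V → K) →ₗ[K] K) ∘ₗ Wr.subtype ∘ₗ (LinearMap.ker q).subtype) := by
        intro x y hxy
        have hx := x.2
        have hy := y.2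
        simp only [LinearMap.mem_ker, hq, LinearMap.domRestrict_apply] at hx hy
        ext1; ext1
        apply funext
        intro w
        by_cases hw : w = v
        · subst hw; exact hxy
        · have hx0 : (x : Wr).1 w = 0 := congrFun hx ⟨w, hw⟩
          have hy0 : (y : Wr).1 w = 0 := congrFun hy ⟨w, hw⟩
          rw [hx0, hy0]
      calc finrank K (LinearMap.ker q) ≤ finrank K K :=
            LinearMap.finrank_le_finrank_of_injective hinj
        _ = 1 := finrank_self K
    rw [Matrix.rank, Matrix.rank, hrange, ← hWr, ← h2]
    omega
end RowDel


/-- for a loopless graph `G` (symmetric, zero diagonal) and a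
vertex `v`, the nullities of `G` and `G∖v` differ by exactly one. -/
theorem nullity_delete_loopless (G : Matrix V V (ZMod 2)) (hG : G.IsSymm)
    (hdiag : ∀ x : V, G x x = 0) (v : V) :
    |(nullity G : ℤ) - (nullity (deleteVertex G v) : ℤ)| = 1 := by
  classical
  set B := deleteVertex G v with hB
  set C := G.submatrix (Subtype.val : {x : V // x ≠ v} → V) id with hC
  have h1 := aux_rank_row_del G v
  rw [← hC] at h1
  have hBT : Bᵀ = Cᵀ.submatrix (Subtype.val : {x : V // x ≠ v} → V) id := rfl
  have h2 := aux_rank_row_del Cᵀ v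
  rw [← hBT] at h2
  have hrtB : Bᵀ.rank = B.rank := Matrix.rank_transpose B
  have hrtC : Cᵀ.rank = C.rank := Matrix.rank_transpose C
  have hb1 : B.rank ≤ G.rank := by omega
  have hb2 : G.rank ≤ B.rank + 2 := by omega
  have hBsymm : B.IsSymm := by
    rw [Matrix.IsSymm]
    ext x y
    rw [Matrix.transpose_apply]
    show G y.val x.val = G x.val y.val
    exact (congrFun (congrFun hG ↑y) ↑x).symm
  have hBdiag : ∀ x : {x : V // x ≠ v}, B x x = 0 := fun x => hdiag x.val
  have heG : Even G.rank := aux_even_rank (Fintype.card V) V G rfl hG hdiag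
  have heB : Even B.rank :=
    aux_even_rank (Fintype.card {x : V // x ≠ v}) _ B rfl hBsymm hBdiag
  have hcV : Fintype.card {x : V // x ≠ v} + 1 = Fintype.card V := by
    have h3 : Fintype.card {x : V // ¬ x = v} = Fintype.card V - Fintype.card {x : V // x = v} :=
      Fintype.card_subtype_compl _
    have h4 : Fintype.card {x : V // x = v} = 1 := Fintype.card_subtype_eq v
    have h5 : 1 ≤ Fintype.card V := Fintype.card_pos_iff.2 ⟨v⟩
    have h6 : Fintype.card {x : V // x ≠ v} = Fintype.card {x : V // ¬ x = v} := rfl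
    omega
  have hrle : G.rank ≤ Fintype.card V := Matrix.rank_le_card_width G
  have hrleB : B.rank ≤ Fintype.card {x : V // x ≠ v} := Matrix.rank_le_card_width B
  rw [abs_eq (by norm_num : (0:ℤ) ≤ 1)]
  unfold nullity
  obtain ⟨a, ha⟩ := heG
  obtain ⟨b, hbb⟩ := heB
  omega
end

section
/- Let M = (V, D) be a vertex-flip-closed delta-matroid and u ∈ V such that the deletion M∖u is proper. Then M∖u is a vertex-flip-closed delta-matroid (on ground set V ∖ {u}). -/
open scoped symmDiff

variable {V : Type*} [DecidableEq V] [Fintype V]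

/-- A single vertex flip: `(true, u)` is the pivot `*u`, `(false, u)` is the
loop complementation `+u`. -/
def applyOp (D : Set (Finset V)) (p : Bool × V) : Set (Finset V) :=
  if p.1 then pivotSS D {p.2} else lcSS D p.2

/-- Apply a finite sequence of single-element pivots and loop complementations. -/
def applySeq (D : Set (Finset V)) (φ : List (Bool × V)) : Set (Finset V) :=
  φ.foldl applyOp D

/-- Deletion of `u`: the sets not containing `u` (ground set `V \ {u}`). -/
def delSS (D : Set (Finset V)) (u : V) : Set (Finset V) :=
  {Y ∈ D | u ∉ Y}

lemma pivot_del (D : Set (Finset V)) (u v : V) (hvu : v ≠ u) :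
    delSS (pivotSS D {v}) u = pivotSS (delSS D u) {v} := by
  ext Y
  simp only [delSS, pivotSS, Set.mem_setOf_eq, Set.mem_image]
  constructor
  · rintro ⟨⟨Z, hZ, rfl⟩, hu⟩
    refine ⟨Z, ⟨hZ, fun hZu => hu ?_⟩, rfl⟩
    rw [Finset.mem_symmDiff]
    exact Or.inl ⟨hZu, fun h => hvu (Finset.mem_singleton.mp h).symm⟩
  · rintro ⟨Z, ⟨hZ, hZu⟩, rfl⟩
    refine ⟨⟨Z, hZ, rfl⟩, fun hu => ?_⟩
    rw [Finset.mem_symmDiff] at hu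
    rcases hu with ⟨h, _⟩ | ⟨h, _⟩
    · exact hZu h
    · exact hvu (Finset.mem_singleton.mp h).symm

lemma lc_del (D : Set (Finset V)) (u v : V) (hvu : v ≠ u) :
    delSS (lcSS D v) u = lcSS (delSS D u) v := by
  have key : ∀ Y : Finset V, u ∉ Y →
      (Y ∈ ((fun Z => Z ∪ {v}) '' {Z ∈ D | v ∉ Z}) ↔
       Y ∈ ((fun Z => Z ∪ {v}) '' {Z ∈ delSS D u | v ∉ Z})) := by
    intro Y hu
    constructor
    · rintro ⟨Z, ⟨hZ, hv⟩, rfl⟩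
      exact ⟨Z, ⟨⟨hZ, fun h => hu (Finset.mem_union_left _ h)⟩, hv⟩, rfl⟩
    · rintro ⟨Z, ⟨⟨hZ, _⟩, hv⟩, rfl⟩
      exact ⟨Z, ⟨hZ, hv⟩, rfl⟩
  ext Y
  constructor
  · rintro ⟨hlc, hu⟩
    simp only [lcSS, delSS, Set.mem_symmDiff, Set.mem_setOf_eq] at hlc
    simp only [lcSS, delSS, Set.mem_symmDiff, Set.mem_setOf_eq]
    rcases hlc with ⟨h1, h2⟩ | ⟨h1, h2⟩
    · exact Or.inl ⟨⟨h1, hu⟩, fun h => h2 ((key Y hu).mpr h)⟩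
    · exact Or.inr ⟨(key Y hu).mp h1, fun h => h2 h.1⟩
  · intro hlc
    simp only [lcSS, delSS, Set.mem_symmDiff, Set.mem_setOf_eq] at hlc
    have hu : u ∉ Y := by
      rcases hlc with ⟨⟨_, hu⟩, _⟩ | ⟨⟨Z, ⟨⟨_, huZ⟩, _⟩, rfl⟩, _⟩
      · exact hu
      · intro h
        rcases Finset.mem_union.mp h with h | h
        · exact huZ h
        · exact hvu (Finset.mem_singleton.mp h).symm
    refine ⟨?_, hu⟩
    simp only [lcSS, delSS, Set.mem_symmDiff, Set.mem_setOf_eq]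
    rcases hlc with ⟨⟨h1, _⟩, h2⟩ | ⟨h1, h2⟩
    · exact Or.inl ⟨h1, fun h => h2 ((key Y hu).mp h)⟩
    · exact Or.inr ⟨(key Y hu).mpr h1, fun h => h2 ⟨h, hu⟩⟩

lemma applyOp_del (D : Set (Finset V)) (u : V) (p : Bool × V) (h : p.2 ≠ u) :
    applyOp (delSS D u) p = delSS (applyOp D p) u := by
  rcases p with ⟨b, v⟩
  cases b <;> simp only [applyOp] <;> simp only [if_true, if_false, Bool.false_eq_true]
  · exact (lc_del D u v h).symm
  · exact (pivot_del D u v h).symm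

lemma applySeq_del (u : V) : ∀ (φ : List (Bool × V)), (∀ p ∈ φ, p.2 ≠ u) →
    ∀ D : Set (Finset V), applySeq (delSS D u) φ = delSS (applySeq D φ) u := by
  intro φ
  induction φ with
  | nil => intro _ D; rfl
  | cons p φ ih =>
    intro hφ D
    have h1 : p.2 ≠ u := hφ p List.mem_cons_self
    have h2 : ∀ q ∈ φ, q.2 ≠ u := fun q hq => hφ q (List.mem_cons_of_mem p hq)
    show applySeq (applyOp (delSS D u) p) φ = _
    rw [applyOp_del D u p h1]
    exact ih h2 _

lemma applyOp_nonempty (D : Set (Finset V)) (p : Bool × V) (h : D.Nonempty) :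
    (applyOp D p).Nonempty := by
  rcases p with ⟨b, v⟩
  rcases h with ⟨Y, hY⟩
  cases b
  · -- loop complementation
    simp only [applyOp, if_neg (by simp : ¬ (false = true))]
    by_cases hE : ∃ Z ∈ D, v ∉ Z
    · rcases hE with ⟨Z, hZ, hv⟩
      refine ⟨Z, Or.inl ⟨hZ, ?_⟩⟩
      rintro ⟨W, ⟨_, _⟩, rfl⟩
      exact hv (Finset.mem_union_right _ (Finset.mem_singleton_self v))
    · refine ⟨Y, Or.inl ⟨hY, ?_⟩⟩
      rintro ⟨W, ⟨hW1, hW2⟩, rfl⟩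
      exact hE ⟨W, hW1, hW2⟩
  · exact ⟨Y ∆ {v}, ⟨Y, hY, rfl⟩⟩

lemma applySeq_nonempty (φ : List (Bool × V)) :
    ∀ D : Set (Finset V), D.Nonempty → (applySeq D φ).Nonempty := by
  induction φ with
  | nil => exact fun D h => h
  | cons p φ ih => exact fun D h => ih _ (applyOp_nonempty D p h)

lemma del_exchange (D : Set (Finset V)) (u : V) (hDM : DeltaMatroid D) :
    ∀ X ∈ delSS D u, ∀ Y ∈ delSS D u, ∀ w ∈ X ∆ Y,
      ∃ v ∈ X ∆ Y, X ∆ {w, v} ∈ delSS D u := by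
  rintro X ⟨hX, hXu⟩ Y ⟨hY, hYu⟩ w hw
  obtain ⟨v, hv, hX'⟩ := hDM.2 X hX Y hY w hw
  refine ⟨v, hv, hX', fun hmem => ?_⟩
  rw [Finset.mem_symmDiff] at hmem
  rcases hmem with ⟨h, _⟩ | ⟨h, _⟩
  · exact hXu h
  · rcases Finset.mem_insert.mp h with rfl | h
    · rw [Finset.mem_symmDiff] at hw; tauto
    · rw [Finset.mem_singleton] at h; subst h
      rw [Finset.mem_symmDiff] at hv; tauto


/-- if `M` is a vertex-flip-closed delta-matroid and `M∖u` is
proper, then `M∖u` is a vertex-flip-closed delta-matroid on ground set `V∖{u}`. -/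
theorem vfClosed_delete (D : Set (Finset V)) (u : V)
    (hDM : DeltaMatroid D)
    (hVF : ∀ φ : List (Bool × V), DeltaMatroid (applySeq D φ))
    (hprop : (delSS D u).Nonempty) :
    ∀ φ : List (Bool × V), (∀ p ∈ φ, p.2 ≠ u) →
      DeltaMatroid (applySeq (delSS D u) φ) := by
  intro φ hφ
  rw [applySeq_del u φ hφ D]
  constructor
  · have := applySeq_nonempty φ (delSS D u) hprop
    rwa [applySeq_del u φ hφ D] at this
  · exact del_exchange _ u (hVF φ)
end
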